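/- Let P be an n×n positive definite matrix and let D, X be n×m complex matrices such that D has linearly independent columns. Then the solution S of the constrained optimization problem: minimize the Frobenius norm ‖S‖_F subject to S·(P·D) = P·X + P·D, is given by S = P·S̃·P⁻¹ where S̃ = (X + D)·(D*·P²·D)⁻¹·D*·P². -/

import Mathlib

open Matrix
open scoped ComplexOrder

/-- The Frobenius norm of a complex matrix. -/
noncomputable def frobNorm {n m : ℕ} (S : Matrix (Fin n) (Fin m) ℂ) : ℝ :=
  Real.sqrt (∑ i, ∑ j, ‖S i j‖ ^ 2)

/-- The minimizer of `‖S‖_F` subject to `S (P D) = P X + P D` is `P S̃ P⁻¹`,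
where `S̃ = (X + D) (Dᴴ P² D)⁻¹ Dᴴ P²`. -/
theorem stmt0 {n m : ℕ} (P : Matrix (Fin n) (Fin n) ℂ) (hP : P.PosDef)
    (D X : Matrix (Fin n) (Fin m) ℂ) (hD : LinearIndependent ℂ Dᵀ)
    (Stil S : Matrix (Fin n) (Fin n) ℂ)
    (hStil : Stil = (X + D) * (Dᴴ * (P * P) * D)⁻¹ * Dᴴ * (P * P))
    (hS : S = P * Stil * P⁻¹) :
    S * (P * D) = P * X + P * D ∧
      ∀ S' : Matrix (Fin n) (Fin n) ℂ,
        S' * (P * D) = P * X + P * D → frobNorm S ≤ frobNorm S' := by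
  have hPH : Pᴴ = P := hP.isHermitian
  have hPdet : IsUnit P.det := (Matrix.isUnit_iff_isUnit_det _).1 hP.isUnit
  set N := Dᴴ * (P * P) * D with hN
  -- injectivity of mulVec of P * D
  have hDinj : Function.Injective D.mulVec := Matrix.mulVec_injective_iff.2 hD
  have hPinj : Function.Injective P.mulVec :=
    Matrix.mulVec_injective_iff_isUnit.2 hP.isUnit
  have hAinj : Function.Injective (P * D).mulVec := by
    intro x y h
    apply hDinj; apply hPinj
    simpa [← Matrix.mulVec_mulVec] using h
  -- positive definiteness of N = (P D)ᴴ (P D)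
  have hNA : N = (P * D)ᴴ * (P * D) := by
    rw [hN, Matrix.conjTranspose_mul, hPH]
    simp only [Matrix.mul_assoc]
  have hNpd : N.PosDef := by
    rw [hNA]
    refine Matrix.PosDef.of_dotProduct_mulVec_pos (Matrix.isHermitian_conjTranspose_mul_self _) fun x hx => ?_
    rw [← Matrix.mulVec_mulVec, Matrix.dotProduct_mulVec, Matrix.vecMul_conjTranspose,
      star_star]
    refine Matrix.dotProduct_star_self_pos_iff.2 fun h0 => hx ?_
    exact hAinj (by simpa using h0)
  have hNdet : IsUnit N.det := (Matrix.isUnit_iff_isUnit_det _).1 hNpd.isUnit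
  -- simplified formula for S
  have hS' : S = P * ((X + D) * (N⁻¹ * (Dᴴ * P))) := by
    rw [hS, hStil]
    simp only [Matrix.mul_assoc]
    rw [Matrix.mul_nonsing_inv P hPdet, Matrix.mul_one]
  -- the constraint
  have hcon : S * (P * D) = P * X + P * D := by
    have : S * (P * D) = P * ((X + D) * (N⁻¹ * N)) := by
      rw [hS', hN]
      simp only [Matrix.mul_assoc]
    rw [this, Matrix.nonsing_inv_mul N hNdet, Matrix.mul_one, Matrix.mul_add]
  refine ⟨hcon, fun S' hS'c => ?_⟩
  -- E := S' - S annihilates P * D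
  set E := S' - S with hE
  have hE0 : E * (P * D) = 0 := by
    rw [hE, Matrix.sub_mul, hS'c, hcon, sub_self]
  -- S * Eᴴ = 0
  have hDPE : Dᴴ * (P * Eᴴ) = 0 := by
    have h1 : (P * D)ᴴ * Eᴴ = 0 := by
      rw [← Matrix.conjTranspose_mul, hE0, Matrix.conjTranspose_zero]
    rw [Matrix.conjTranspose_mul, hPH] at h1
    rw [← Matrix.mul_assoc]
    exact h1
  have hSE : S * Eᴴ = 0 := by
    rw [hS']
    simp only [Matrix.mul_assoc]
    rw [hDPE]
    simp
  -- cross term vanishes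
  have cross : ∑ i, ∑ j, (S i j * (starRingEnd ℂ) (E i j)).re = 0 := by
    have ht : (S * Eᴴ).trace = 0 := by rw [hSE]; simp
    have ht2 : ∑ i, ∑ j, S i j * (starRingEnd ℂ) (E i j) = 0 := by
      simpa [Matrix.trace, Matrix.mul_apply, Matrix.diag, Matrix.conjTranspose_apply]
        using ht
    calc ∑ i, ∑ j, (S i j * (starRingEnd ℂ) (E i j)).re
        = (∑ i, ∑ j, S i j * (starRingEnd ℂ) (E i j)).re := by
          simp [Complex.re_sum]
      _ = 0 := by rw [ht2]; simp
  -- Pythagoras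
  have pyth : ∑ i, ∑ j, ‖S' i j‖ ^ 2
      = (∑ i, ∑ j, ‖S i j‖ ^ 2) + ∑ i, ∑ j, ‖E i j‖ ^ 2 := by
    have hptw : ∀ i j, ‖S' i j‖ ^ 2
        = ‖S i j‖ ^ 2 + ‖E i j‖ ^ 2 + 2 * (S i j * (starRingEnd ℂ) (E i j)).re := by
      intro i j
      have : S' i j = S i j + E i j := by simp [hE]
      rw [this]
      simp only [Complex.sq_norm]
      exact Complex.normSq_add _ _
    calc ∑ i, ∑ j, ‖S' i j‖ ^ 2
        = ∑ i, ∑ j, (‖S i j‖ ^ 2 + ‖E i j‖ ^ 2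
            + 2 * (S i j * (starRingEnd ℂ) (E i j)).re) := by
          exact Finset.sum_congr rfl fun i _ =>
            Finset.sum_congr rfl fun j _ => hptw i j
      _ = (∑ i, ∑ j, ‖S i j‖ ^ 2) + (∑ i, ∑ j, ‖E i j‖ ^ 2)
            + 2 * ∑ i, ∑ j, (S i j * (starRingEnd ℂ) (E i j)).re := by
          simp [Finset.sum_add_distrib, Finset.mul_sum, mul_add]
      _ = (∑ i, ∑ j, ‖S i j‖ ^ 2) + ∑ i, ∑ j, ‖E i j‖ ^ 2 := by
          rw [cross]; ring
  -- conclude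
  unfold frobNorm
  apply Real.sqrt_le_sqrt
  rw [pyth]
  have hnn : 0 ≤ ∑ i, ∑ j, ‖E i j‖ ^ 2 :=
    Finset.sum_nonneg fun i _ => Finset.sum_nonneg fun j _ => sq_nonneg _
  linarith
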